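/- For every n ≥ 3, there exist leaf-ordered rooted binary trees T and T′ on n leaves that differ by a single rooted SPR move and have maximal OLA distance d_OLA(T, T′) = n − 2; specifically, the caterpillar tree with OLA encoding (0, 0, 0, ..., 0) and the caterpillar tree with OLA encoding (0, 1, 2, ..., n−2) differ by a single SPR move (pruning the subtree consisting of leaf 0 and regrafting it at the edge above the root's other child), and their encodings differ in all n − 2 entries after the first. -/

import Mathlib

/-- A rooted binary tree whose leaves carry natural-number labels. -/
inductive BTree : Type
  | leaf : ℕ → BTree
  | node : BTree → BTree → BTree
  deriving DecidableEq

namespace BTree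

/-- The minimum leaf label in a tree (the "clade-founder" label of its root). -/
def minLeaf : BTree → ℕ
  | leaf j => j
  | node l r => min (minLeaf l) (minLeaf r)

/-- The label of the root node of a subtree: a leaf carries its own label,
and an internal node carries its canonical label `-CS`, where `CS` is the
"clade-splitter" label, i.e. the maximum of the children's clade-founder labels. -/
def nodeLabel : BTree → ℤ
  | leaf j => (j : ℤ)
  | node l r => -(max (minLeaf l) (minLeaf r) : ℤ)

/-- The multiset of leaf labels of a tree. -/
def leafMultiset : BTree → Multiset ℕ
  | leaf j => {j}
  | node l r => leafMultiset l + leafMultiset r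

/-- Canonical form for representing an *unordered* tree by an ordered one:
at each internal node the left subtree contains the smaller minimum leaf label. -/
def Canonical : BTree → Prop
  | leaf _ => True
  | node l r => minLeaf l < minLeaf r ∧ Canonical l ∧ Canonical r

/-- `IsRBT n T` : `T` is (the canonical representative of) a leaf-ordered rooted
binary tree on `n` leaves, bijectively labeled `0, 1, ..., n-1`. -/
def IsRBT (n : ℕ) (T : BTree) : Prop :=
  Canonical T ∧ leafMultiset T = Multiset.range n

/-- Number of leaves. -/
def numLeaves : BTree → ℕ
  | leaf _ => 1
  | node l r => numLeaves l + numLeaves r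

/-- Delete the leaf labeled `i` (together with its parent); return the label of
its sister node together with the remaining tree. -/
def deleteLeaf (i : ℕ) : BTree → Option (ℤ × BTree)
  | leaf _ => none
  | node l r =>
    if l = leaf i then some (nodeLabel r, r)
    else if r = leaf i then some (nodeLabel l, l)
    else
      match deleteLeaf i l with
      | some (a, l') => some (a, node l' r)
      | none =>
        match deleteLeaf i r with
        | some (a, r') => some (a, node l r')
        | none => none

/-- Deconstruct a tree by removing leaves `m, m-1, ..., 1` in reverse order,
recording the (leaf or canonical internal) label of the sister of each removed leaf. -/
def olaEncodeAux : ℕ → BTree → List ℤ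
  | 0, _ => []
  | m + 1, T =>
    match deleteLeaf (m + 1) T with
    | some (a, T') => olaEncodeAux m T' ++ [a]
    | none => []

/-- The OLA (ordered leaf attachment) encoding `(a_1, ..., a_{n-1})` of a tree on
`n` leaves: `a_i` is the label of the node that is the sister of leaf `i` at the
step when leaf `i` is attached. -/
def olaEncode (T : BTree) : List ℤ := olaEncodeAux (numLeaves T - 1) T

/-- Attach a new leaf labeled `i` as the sister of the node whose label is `a`
(subdividing that node's parent edge). -/
def attachAt (a : ℤ) (i : ℕ) : BTree → BTree
  | leaf j => if (j : ℤ) = a then node (leaf j) (leaf i) else leaf j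
  | node l r =>
    if nodeLabel (node l r) = a then node (node l r) (leaf i)
    else node (attachAt a i l) (attachAt a i r)

/-- Helper for OLA decoding: attach leaves `i, i+1, ...` at the recorded labels. -/
def olaDecodeAux : BTree → ℕ → List ℤ → BTree
  | T, _, [] => T
  | T, i, a :: rest => olaDecodeAux (attachAt a i T) (i + 1) rest

/-- The OLA decoding: starting from the single leaf `0`, attach leaf `i` as the
sister of the node labeled `a_i`, for `i = 1, ..., n-1`. -/
def olaDecode (v : List ℤ) : BTree := olaDecodeAux (leaf 0) 1 v

end BTree

/-- `ValidCode v` : membership of `v = (a_1, ..., a_m)` in `C_m`, i.e. the entry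
`a_i` (at list index `i - 1`) satisfies `-i < a_i < i`. -/
def ValidCode (v : List ℤ) : Prop :=
  ∀ i : Fin v.length, -((i : ℤ) + 1) < v.get i ∧ v.get i < (i : ℤ) + 1

/-- The OLA distance: the Hamming distance between the OLA encodings. -/
def olaDist (T T' : BTree) : ℕ :=
  ((BTree.olaEncode T).zip (BTree.olaEncode T')).countP fun p => decide (p.1 ≠ p.2)

/-- One-hole contexts, marking the position of a subtree/edge in a tree. -/
inductive Ctx : Type
  | hole : Ctx
  | left : Ctx → BTree → Ctx
  | right : BTree → Ctx → Ctx
  deriving DecidableEq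

/-- Fill the hole of a context with a tree. -/
def Ctx.fill : Ctx → BTree → BTree
  | .hole, T => T
  | .left c r, T => BTree.node (Ctx.fill c T) r
  | .right l c, T => BTree.node l (Ctx.fill c T)

/-- Composition of contexts: `(c.comp d).fill X = c.fill (d.fill X)`. -/
def Ctx.comp : Ctx → Ctx → Ctx
  | .hole, d => d
  | .left c r, d => .left (Ctx.comp c d) r
  | .right l c, d => .right l (Ctx.comp c d)

/-- Equality of ordered binary trees as *unordered* trees (children may be swapped
at every internal node). -/
def TreeEquiv : BTree → BTree → Prop
  | .leaf i, .leaf j => i = j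
  | .node l r, .node l' r' =>
      (TreeEquiv l l' ∧ TreeEquiv r r') ∨ (TreeEquiv l r' ∧ TreeEquiv r l')
  | _, _ => False

/-- `T'` is obtained from `T` by a single NNI move: contract an internal edge
(the edge above the subtree `node A B`) and re-resolve the resulting degree-4
node in one of the two other possible ways (unordered). -/
def IsNNIMove (T T' : BTree) : Prop :=
  ∃ (c : Ctx) (A B C : BTree),
    TreeEquiv T (Ctx.fill c (BTree.node (BTree.node A B) C)) ∧
    TreeEquiv T' (Ctx.fill c (BTree.node (BTree.node A C) B))

/-- `T'` is obtained from `T` by a single rooted SPR move: prune the subtree `S`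
(suppressing the resulting degree-2 node) and regraft it by subdividing an edge
of the remaining tree. -/
def IsSPRMove (T T' : BTree) : Prop :=
  ∃ (S : BTree) (c c' : Ctx) (X Y : BTree),
    TreeEquiv T (Ctx.fill c (BTree.node S X)) ∧
    Ctx.fill c X = Ctx.fill c' Y ∧
    TreeEquiv T' (Ctx.fill c' (BTree.node S Y))

/-- The multiset of canonical labels of the internal nodes of a tree. -/
def internalLabels : BTree → Multiset ℤ
  | .leaf _ => 0
  | .node l r => BTree.nodeLabel (BTree.node l r) ::ₘ (internalLabels l + internalLabels r)

/-- `prune k T` : delete all leaves with label `≥ k` and suppress the resulting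
degree-2 nodes (`none` if no leaf survives). -/
def prune (k : ℕ) : BTree → Option BTree
  | .leaf j => if j < k then some (.leaf j) else none
  | .node l r =>
    match prune k l, prune k r with
    | some l', some r' => some (.node l' r')
    | some l', none => some l'
    | none, some r' => some r'
    | none, none => none

/-! ### Auxiliary material for the proof -/

namespace OLAAux

open BTree

/-- Left caterpillar spine: wrap `t` with leaves from `L`, each new leaf on the right. -/
def spine : List ℕ → BTree → BTree
  | [], t => t
  | a :: as, t => .node (spine as t) (.leaf a)

/-- Right comb: wrap `t` with leaves from `L`, each new leaf on the left. -/
def comb : List ℕ → BTree → BTree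
  | [], t => t
  | a :: as, t => .node (.leaf a) (comb as t)

lemma spine_append (L : List ℕ) (a : ℕ) (t : BTree) :
    spine (L ++ [a]) t = spine L (.node t (.leaf a)) := by
  induction L with
  | nil => rfl
  | cons b bs ih => simp [spine, ih]

lemma comb_append (L : List ℕ) (a : ℕ) (t : BTree) :
    comb (L ++ [a]) t = comb L (.node (.leaf a) t) := by
  induction L with
  | nil => rfl
  | cons b bs ih => simp [comb, ih]

lemma numLeaves_spine (L : List ℕ) (t : BTree) :
    numLeaves (spine L t) = L.length + numLeaves t := by
  induction L with
  | nil => simp [spine]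
  | cons b bs ih => simp [spine, numLeaves, ih]; omega

lemma numLeaves_comb (L : List ℕ) (t : BTree) :
    numLeaves (comb L t) = L.length + numLeaves t := by
  induction L with
  | nil => simp [comb]
  | cons b bs ih => simp [comb, numLeaves, ih]; omega

lemma leafMultiset_spine (L : List ℕ) (t : BTree) :
    leafMultiset (spine L t) = (L : Multiset ℕ) + leafMultiset t := by
  induction L with
  | nil => simp [spine]
  | cons b bs ih =>
      simp only [spine, leafMultiset, ih]
      rw [← Multiset.cons_coe, Multiset.cons_add,
        add_comm ((bs : Multiset ℕ) + leafMultiset t) {b}, Multiset.singleton_add]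

lemma leafMultiset_comb (L : List ℕ) (t : BTree) :
    leafMultiset (comb L t) = (L : Multiset ℕ) + leafMultiset t := by
  induction L with
  | nil => simp [comb]
  | cons b bs ih =>
      simp only [comb, leafMultiset, ih]
      rw [← Multiset.cons_coe, Multiset.cons_add, Multiset.singleton_add]

lemma spine_ne_leaf (L : List ℕ) (l r : BTree) (x : ℕ) :
    spine L (.node l r) ≠ .leaf x := by
  cases L <;> simp [spine]

lemma comb_ne_leaf (L : List ℕ) (l r : BTree) (x : ℕ) :
    comb L (.node l r) ≠ .leaf x := by
  cases L <;> simp [comb]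

lemma deleteLeaf_spine (j : ℕ) (L : List ℕ) (hj : ∀ a ∈ L, a ≠ j)
    (l r : BTree) (a : ℤ) (t' : BTree)
    (ht : deleteLeaf j (.node l r) = some (a, t')) :
    deleteLeaf j (spine L (.node l r)) = some (a, spine L t') := by
  induction L with
  | nil => simpa [spine] using ht
  | cons b bs ih =>
      have hb : b ≠ j := hj b (by simp)
      have ih' := ih (fun x hx => hj x (by simp [hx]))
      simp only [spine, deleteLeaf]
      rw [if_neg (spine_ne_leaf bs l r j), if_neg (by simp [hb]), ih']

lemma deleteLeaf_comb (j : ℕ) (L : List ℕ) (hj : ∀ a ∈ L, a ≠ j)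
    (l r : BTree) (a : ℤ) (t' : BTree)
    (ht : deleteLeaf j (.node l r) = some (a, t')) :
    deleteLeaf j (comb L (.node l r)) = some (a, comb L t') := by
  induction L with
  | nil => simpa [comb] using ht
  | cons b bs ih =>
      have hb : b ≠ j := hj b (by simp)
      have ih' := ih (fun x hx => hj x (by simp [hx]))
      simp only [comb, deleteLeaf]
      rw [if_neg (by simp [hb]), if_neg (comb_ne_leaf bs l r j)]
      simp [deleteLeaf, ih']

lemma deleteLeaf_pair_right (x j : ℕ) (h : x ≠ j) :
    deleteLeaf j (.node (.leaf x) (.leaf j)) = some ((x : ℤ), .leaf x) := by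
  simp [deleteLeaf, nodeLabel, h]

lemma olaEncodeAux_spine (k : ℕ) :
    olaEncodeAux k (spine (List.range' 1 k) (.leaf 0)) = List.replicate k (0 : ℤ) := by
  induction k with
  | zero => rfl
  | succ k ih =>
      have hrange : List.range' 1 (k + 1) = List.range' 1 k ++ [k + 1] := by
        rw [List.range'_concat]; simp [Nat.add_comm]
      have hdel : deleteLeaf (k + 1) (spine (List.range' 1 (k + 1)) (.leaf 0)) =
          some ((0 : ℤ), spine (List.range' 1 k) (.leaf 0)) := by
        rw [hrange, spine_append]
        refine deleteLeaf_spine (k + 1) _ ?_ _ _ _ _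
          (deleteLeaf_pair_right 0 (k + 1) (by omega))
        intro a ha
        obtain ⟨i, hi, rfl⟩ := List.mem_range'.1 ha
        omega
      rw [olaEncodeAux, hdel]
      show olaEncodeAux k (spine (List.range' 1 k) (.leaf 0)) ++ [(0 : ℤ)] = _
      rw [ih, ← List.replicate_succ']

lemma olaEncodeAux_comb (k : ℕ) :
    olaEncodeAux k (comb (List.range' 0 k) (.leaf k)) =
      List.ofFn (fun i : Fin k => (i : ℤ)) := by
  induction k with
  | zero => rfl
  | succ k ih =>
      have hrange : List.range' 0 (k + 1) = List.range' 0 k ++ [k] := by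
        rw [List.range'_concat]; simp
      have hdel : deleteLeaf (k + 1) (comb (List.range' 0 (k + 1)) (.leaf (k + 1))) =
          some ((k : ℤ), comb (List.range' 0 k) (.leaf k)) := by
        rw [hrange, comb_append]
        refine deleteLeaf_comb (k + 1) _ ?_ _ _ _ _
          (deleteLeaf_pair_right k (k + 1) (by omega))
        intro a ha
        obtain ⟨i, hi, rfl⟩ := List.mem_range'.1 ha
        omega
      rw [olaEncodeAux, hdel]
      show olaEncodeAux k (comb (List.range' 0 k) (.leaf k)) ++ [(k : ℤ)] = _
      rw [ih, List.ofFn_succ']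
      simp [List.concat_eq_append]

lemma canonical_spine (L : List ℕ) (h : ∀ a ∈ L, 0 < a) (t : BTree)
    (ht : Canonical t) (hm : minLeaf t = 0) :
    Canonical (spine L t) ∧ minLeaf (spine L t) = 0 := by
  induction L with
  | nil => exact ⟨ht, hm⟩
  | cons b bs ih =>
      obtain ⟨hc, hm'⟩ := ih (fun x hx => h x (by simp [hx]))
      constructor
      · show Canonical (.node (spine bs t) (.leaf b))
        refine ⟨?_, hc, trivial⟩
        show minLeaf (spine bs t) < minLeaf (.leaf b)
        rw [hm']
        exact h b (by simp)
      · show minLeaf (.node (spine bs t) (.leaf b)) = 0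
        show min (minLeaf (spine bs t)) (minLeaf (.leaf b)) = 0
        rw [hm']
        simp

lemma canonical_comb (m : ℕ) : ∀ s : ℕ,
    Canonical (comb (List.range' s m) (.leaf (s + m))) ∧
      minLeaf (comb (List.range' s m) (.leaf (s + m))) = s := by
  induction m with
  | zero => intro s; exact ⟨trivial, rfl⟩
  | succ m ih =>
      intro s
      obtain ⟨hc, hm⟩ := ih (s + 1)
      rw [List.range'_succ, show s + (m + 1) = (s + 1) + m from by omega]
      constructor
      · show Canonical (.node (.leaf s) (comb (List.range' (s + 1) m) (.leaf (s + 1 + m))))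
        refine ⟨?_, trivial, hc⟩
        show minLeaf (.leaf s) < minLeaf (comb (List.range' (s + 1) m) (.leaf (s + 1 + m)))
        rw [hm]
        show s < s + 1
        omega
      · show min (minLeaf (.leaf s))
            (minLeaf (comb (List.range' (s + 1) m) (.leaf (s + 1 + m)))) = s
        rw [hm]
        show min s (s + 1) = s
        omega

/-- The context carving out the innermost position of a spine. -/
def ctxSpine : List ℕ → Ctx
  | [] => .hole
  | a :: as => .left (ctxSpine as) (.leaf a)

lemma fill_ctxSpine (L : List ℕ) (t : BTree) :
    (ctxSpine L).fill t = spine L t := by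
  induction L with
  | nil => rfl
  | cons b bs ih => simp [ctxSpine, Ctx.fill, spine, ih]

lemma treeEquiv_refl (t : BTree) : TreeEquiv t t := by
  induction t with
  | leaf j => exact rfl
  | node l r ihl ihr => exact Or.inl ⟨ihl, ihr⟩

lemma treeEquiv_comb_spine (L : List ℕ) (t t' : BTree) (h : TreeEquiv t t') :
    TreeEquiv (comb L t) (spine L t') := by
  induction L with
  | nil => exact h
  | cons b bs ih => exact Or.inr ⟨rfl, ih⟩

lemma countP_zip_replicate (L : List ℤ) (h : ∀ x ∈ L, x ≠ 0) :
    ((List.replicate L.length (0 : ℤ)).zip L).countP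
      (fun p => decide (p.1 ≠ p.2)) = L.length := by
  induction L with
  | nil => rfl
  | cons b bs ih =>
      have hb : b ≠ 0 := h b (by simp)
      simp only [List.length_cons, List.replicate_succ, List.zip_cons_cons,
        List.countP_cons]
      rw [ih (fun x hx => h x (by simp [hx]))]
      simp [hb.symm]

lemma countP_zip_replicate_ofFn (k : ℕ) (g : Fin k → ℤ) (hg : ∀ i, g i ≠ 0) :
    ((List.replicate k (0 : ℤ)).zip (List.ofFn g)).countP
      (fun p => decide (p.1 ≠ p.2)) = k := by
  have h := countP_zip_replicate (List.ofFn g) (by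
    intro x hx
    obtain ⟨i, rfl⟩ := List.mem_ofFn.1 hx
    exact hg i)
  simpa using h

end OLAAux

open OLAAux BTree in
/-- For every `n ≥ 3` there exist leaf-ordered rooted binary trees
`T, T'` on `n` leaves that differ by a single rooted SPR move and attain the maximal
OLA distance `d_OLA(T, T') = n - 2`: specifically the caterpillar tree with OLA
encoding `(0, 0, ..., 0)` and the caterpillar tree with OLA encoding
`(0, 1, 2, ..., n-2)`, whose encodings differ in all `n - 2` entries after the
first. -/
theorem exists_spr_neighbors_max_ola_dist (n : ℕ) (hn : 3 ≤ n) :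
    ∃ T T' : BTree, BTree.IsRBT n T ∧ BTree.IsRBT n T' ∧ IsSPRMove T T' ∧
      BTree.olaEncode T = List.replicate (n - 1) (0 : ℤ) ∧
      BTree.olaEncode T' = List.ofFn (fun i : Fin (n - 1) => (i : ℤ)) ∧
      olaDist T T' = n - 2 := by
  classical
  obtain ⟨k, rfl⟩ : ∃ k, n = k + 3 := ⟨n - 3, by omega⟩
  refine ⟨spine (List.range' 1 (k + 2)) (.leaf 0),
          comb (List.range' 0 (k + 2)) (.leaf (k + 2)), ⟨?_, ?_⟩, ⟨?_, ?_⟩, ?_, ?_, ?_, ?_⟩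
  · -- Canonical T
    refine (canonical_spine (List.range' 1 (k + 2)) ?_ (.leaf 0) trivial rfl).1
    intro a ha
    obtain ⟨i, hi, rfl⟩ := List.mem_range'.1 ha
    omega
  · -- leafMultiset T
    rw [leafMultiset_spine]
    have h0 : List.range (k + 3) = 0 :: List.range' 1 (k + 2) := by
      rw [List.range_eq_range', show k + 3 = (k + 2) + 1 from rfl, List.range'_succ]
    have hms : (Multiset.range (k + 3)) = (0 : ℕ) ::ₘ (List.range' 1 (k + 2) : Multiset ℕ) := by
      show ((List.range (k + 3) : List ℕ) : Multiset ℕ) = _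
      rw [h0]; rfl
    rw [hms]
    show (List.range' 1 (k + 2) : Multiset ℕ) + {0} = _
    rw [add_comm, Multiset.singleton_add]
  · -- Canonical T'
    have h := (canonical_comb (k + 2) 0).1
    rwa [Nat.zero_add] at h
  · -- leafMultiset T'
    rw [leafMultiset_comb]
    show (List.range' 0 (k + 2) : Multiset ℕ) + (([k + 2] : List ℕ) : Multiset ℕ) = _
    rw [Multiset.coe_add]
    have h0 : List.range (k + 3) = List.range' 0 (k + 2) ++ [k + 2] := by
      rw [List.range_eq_range', show k + 3 = (k + 2) + 1 from rfl,
        List.range'_concat (s := 0) (n := k + 2)]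
      norm_num
    rw [← h0]
    rfl
  · -- SPR move
    have hr : List.range' 1 (k + 2) = List.range' 1 (k + 1) ++ [k + 2] := by
      rw [show k + 2 = (k + 1) + 1 from rfl, List.range'_concat]
      simp only [List.append_cancel_left_eq, List.cons.injEq, and_true]
      omega
    refine ⟨.leaf 0, ctxSpine (List.range' 1 (k + 1)), .hole, .leaf (k + 2),
            spine (List.range' 1 (k + 1)) (.leaf (k + 2)), ?_, ?_, ?_⟩
    · rw [fill_ctxSpine, ← spine_append, ← hr]
      exact treeEquiv_refl _
    · rw [fill_ctxSpine]
      rfl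
    · show TreeEquiv (comb (List.range' 0 (k + 2)) (.leaf (k + 2)))
        (.node (.leaf 0) (spine (List.range' 1 (k + 1)) (.leaf (k + 2))))
      rw [show k + 2 = (k + 1) + 1 from rfl, List.range'_succ]
      exact Or.inl ⟨rfl, treeEquiv_comb_spine _ _ _ (treeEquiv_refl _)⟩
  · -- encoding of T
    have hnl : numLeaves (spine (List.range' 1 (k + 2)) (.leaf 0)) = k + 3 := by
      rw [numLeaves_spine]; simp [numLeaves]
    show BTree.olaEncode _ = List.replicate (k + 2) (0 : ℤ)
    rw [BTree.olaEncode, hnl]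
    exact olaEncodeAux_spine (k + 2)
  · -- encoding of T'
    have hnl : numLeaves (comb (List.range' 0 (k + 2)) (.leaf (k + 2))) = k + 3 := by
      rw [numLeaves_comb]; simp [numLeaves]
    show BTree.olaEncode _ = List.ofFn (fun i : Fin (k + 2) => (i : ℤ))
    rw [BTree.olaEncode, hnl]
    exact olaEncodeAux_comb (k + 2)
  · -- OLA distance
    have h1 : BTree.olaEncode (spine (List.range' 1 (k + 2)) (.leaf 0))
        = List.replicate (k + 2) (0 : ℤ) := by
      have hnl : numLeaves (spine (List.range' 1 (k + 2)) (.leaf 0)) = k + 3 := by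
        rw [numLeaves_spine]; simp [numLeaves]
      rw [BTree.olaEncode, hnl]
      exact olaEncodeAux_spine (k + 2)
    have h2 : BTree.olaEncode (comb (List.range' 0 (k + 2)) (.leaf (k + 2)))
        = List.ofFn (fun i : Fin (k + 2) => (i : ℤ)) := by
      have hnl : numLeaves (comb (List.range' 0 (k + 2)) (.leaf (k + 2))) = k + 3 := by
        rw [numLeaves_comb]; simp [numLeaves]
      rw [BTree.olaEncode, hnl]
      exact olaEncodeAux_comb (k + 2)
    rw [olaDist, h1, h2, show k + 2 = (k + 1) + 1 from rfl, List.ofFn_succ,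
      List.replicate_succ, List.zip_cons_cons, List.countP_cons,
      countP_zip_replicate_ofFn (k + 1) _ ?_]
    · norm_num
      omega
    · intro i
      simp [Fin.val_succ]
      omega
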